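/- Let R be a principal ideal domain and a, b ∈ R not both zero with t = gcd(a,b). Set x = −b/t, y = a/t. Then x and y are coprime, so there exist u, v ∈ R with uy − xv = 1, and the 2n×2n matrix T which acts as [[u, v],[x, y]] on coordinates (2,3), as [[y, −x],[−v, u]] on coordinates (n+2, n+3), and as the identity elsewhere, is an element of Sp_{2n}(R). -/

import Mathlib

open Matrix

/-- The standard symplectic form matrix `J = [[0, Iₙ], [-Iₙ, 0]]`. -/
def Jmat (n : ℕ) (R : Type*) [CommRing R] :
    Matrix (Fin n ⊕ Fin n) (Fin n ⊕ Fin n) R :=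
  fromBlocks 0 1 (-1) 0

/-- `A ∈ Sp_{2n}(R)`, i.e. `AᵀJA = J`. -/
def IsSymp {n : ℕ} {R : Type*} [CommRing R]
    (A : Matrix (Fin n ⊕ Fin n) (Fin n ⊕ Fin n) R) : Prop :=
  Aᵀ * Jmat n R * A = Jmat n R

lemma std_transpose {n : ℕ} {R : Type*} [CommRing R] (i j : Fin n) (c : R) :
    (single i j c)ᵀ = single j i c := by
  ext a b; simp [single, and_comm]

set_option linter.unreachableTactic false in
set_option linter.unusedTactic false in
lemma key {n : ℕ} {R : Type*} [CommRing R] (i j : Fin n) (hij : i ≠ j)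
    (u v x y : R) (h : u * y - x * v = 1) :
    (1 + single i i (u-1) + single i j v
       + single j i x + single j j (y-1))ᵀ *
    (1 + single i i (y-1) + single i j (-x)
       + single j i (-v) + single j j (u-1)) = 1 := by
  have hji : j ≠ i := hij.symm
  simp only [transpose_add, transpose_one, std_transpose]
  simp only [add_mul, mul_add, mul_one, one_mul,
    single_mul_single_same, single_mul_single_of_ne, hij, hji,
    ne_eq, not_false_iff, add_zero, zero_add]
  ext p q
  simp only [Matrix.add_apply, Matrix.one_apply, single, of_apply]
  split_ifs <;> simp_all <;>
    first | ring1 | linear_combination h | linear_combination -h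

lemma inl_std {n : ℕ} {R : Type*} [CommRing R] (i j : Fin n) (c : R) :
    single (Sum.inl i) (Sum.inl j) c
      = fromBlocks (single i j c) 0 0 (0 : Matrix (Fin n) (Fin n) R) := by
  ext (a|a) (b|b) <;> simp [single, fromBlocks]

lemma inr_std {n : ℕ} {R : Type*} [CommRing R] (i j : Fin n) (c : R) :
    single (Sum.inr i) (Sum.inr j) c
      = fromBlocks (0 : Matrix (Fin n) (Fin n) R) 0 0 (single i j c) := by
  ext (a|a) (b|b) <;> simp [single, fromBlocks]

/-- In a PID, if `t = gcd(a,b)`, `x = −b/t`, `y = a/t`, then `x, y` are coprime, there are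
`u, v` with `uy − xv = 1`, and the matrix `T` acting as `[[u,v],[x,y]]` on coordinates
`(2,3)`, as `[[y,−x],[−v,u]]` on coordinates `(n+2,n+3)` and as the identity elsewhere is
symplectic. -/
theorem stmt9 {R : Type*} [CommRing R] [IsDomain R] [IsPrincipalIdealRing R]
    {n : ℕ} (hn : 3 ≤ n) (a b t x y : R)
    (hab : ¬ (a = 0 ∧ b = 0))
    (ht : Ideal.span {a, b} = Ideal.span {t})
    (hx : t * x = -b) (hy : t * y = a) :
    IsCoprime x y ∧
    ∃ u v : R, u * y - x * v = 1 ∧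
      IsSymp ((1 : Matrix (Fin n ⊕ Fin n) (Fin n ⊕ Fin n) R)
        + single (Sum.inl ⟨1, by omega⟩) (Sum.inl ⟨1, by omega⟩) (u - 1)
        + single (Sum.inl ⟨1, by omega⟩) (Sum.inl ⟨2, by omega⟩) v
        + single (Sum.inl ⟨2, by omega⟩) (Sum.inl ⟨1, by omega⟩) x
        + single (Sum.inl ⟨2, by omega⟩) (Sum.inl ⟨2, by omega⟩) (y - 1)
        + single (Sum.inr ⟨1, by omega⟩) (Sum.inr ⟨1, by omega⟩) (y - 1)
        + single (Sum.inr ⟨1, by omega⟩) (Sum.inr ⟨2, by omega⟩) (-x)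
        + single (Sum.inr ⟨2, by omega⟩) (Sum.inr ⟨1, by omega⟩) (-v)
        + single (Sum.inr ⟨2, by omega⟩) (Sum.inr ⟨2, by omega⟩) (u - 1)) := by
  -- t ≠ 0
  have ht0 : t ≠ 0 := by
    rintro rfl
    apply hab
    constructor
    · have : a ∈ Ideal.span ({a, b} : Set R) :=
        Ideal.subset_span (by simp)
      rw [ht] at this
      simpa [Ideal.mem_span_singleton, zero_dvd_iff] using this
    · have : b ∈ Ideal.span ({a, b} : Set R) :=
        Ideal.subset_span (by simp)
      rw [ht] at this
      simpa [Ideal.mem_span_singleton, zero_dvd_iff] using this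
  -- get p, q with t = p * a + q * b
  have htmem : t ∈ Ideal.span ({a, b} : Set R) := by
    rw [ht]; exact Ideal.mem_span_singleton_self t
  rw [Ideal.mem_span_pair] at htmem
  obtain ⟨p, q, hpq⟩ := htmem
  have hkey : p * y - x * q = 1 := by
    apply mul_left_cancel₀ ht0
    rw [mul_one]
    linear_combination hpq + p * hy - q * hx
  have hcop : IsCoprime x y := ⟨-q, p, by linear_combination hkey⟩
  refine ⟨hcop, p, q, hkey, ?_⟩
  -- indices
  have h12 : (⟨1, by omega⟩ : Fin n) ≠ ⟨2, by omega⟩ := by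
    simp [Fin.ext_iff]
  -- rewrite as block matrices
  rw [IsSymp, Jmat]
  rw [inl_std, inl_std, inl_std, inl_std, inr_std, inr_std, inr_std, inr_std,
    ← fromBlocks_one, fromBlocks_add, fromBlocks_add, fromBlocks_add, fromBlocks_add,
    fromBlocks_add, fromBlocks_add, fromBlocks_add, fromBlocks_add]
  simp only [add_zero, zero_add]
  set A : Matrix (Fin n) (Fin n) R :=
    1 + single ⟨1, by omega⟩ ⟨1, by omega⟩ (p - 1)
      + single ⟨1, by omega⟩ ⟨2, by omega⟩ q
      + single ⟨2, by omega⟩ ⟨1, by omega⟩ x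
      + single ⟨2, by omega⟩ ⟨2, by omega⟩ (y - 1) with hA
  set B : Matrix (Fin n) (Fin n) R :=
    1 + single ⟨1, by omega⟩ ⟨1, by omega⟩ (y - 1)
      + single ⟨1, by omega⟩ ⟨2, by omega⟩ (-x)
      + single ⟨2, by omega⟩ ⟨1, by omega⟩ (-q)
      + single ⟨2, by omega⟩ ⟨2, by omega⟩ (p - 1) with hB
  have hAB : Aᵀ * B = 1 := key _ _ h12 p q x y hkey
  have hBA : Bᵀ * A = 1 := by
    have := congrArg Matrix.transpose hAB
    rwa [transpose_mul, transpose_transpose, transpose_one] at this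
  rw [fromBlocks_transpose, fromBlocks_multiply, fromBlocks_multiply]
  simp [hAB, hBA, Matrix.neg_mul, Matrix.mul_neg]
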